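/- arXiv:2107.08080 — 3 statements merged into one kernel-verified Lean document; each statement's English description precedes it below -/
import Mathlib

section
/- The G-rank of x₁²x₂ over a field k (char k ≠ 2,3) equals 3/2, where r^G_k(f) = inf over g(t) ∈ GL₂(k[[t]]) with val_t(g(t)·f) > 0 of 3·val_t(det g(t))/val_t(g(t)·f). -/
/-- The Gauss `t`-adic valuation of a polynomial with coefficients in `k[[t]]`:
the minimum of the `t`-adic valuations of its coefficients. -/
noncomputable def tval {k : Type*} [Field k] {n : ℕ}
    (F : MvPolynomial (Fin n) (PowerSeries k)) : ℕ :=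
  sInf {m : ℕ | ∃ d, PowerSeries.coeff m (MvPolynomial.coeff d F) ≠ 0}

/-- The `t`-adic valuation of a power series. -/
noncomputable def psval {k : Type*} [Field k] (p : PowerSeries k) : ℕ :=
  sInf {m : ℕ | PowerSeries.coeff m p ≠ 0}

/-- The action of a matrix `g` over `k[[t]]` on polynomials by linear substitution
of the variables. -/
noncomputable def matAct {k : Type*} [Field k] {n : ℕ}
    (g : Matrix (Fin n) (Fin n) (PowerSeries k))
    (F : MvPolynomial (Fin n) (PowerSeries k)) : MvPolynomial (Fin n) (PowerSeries k) :=
  MvPolynomial.aeval (fun i => ∑ j, MvPolynomial.C (g i j) * MvPolynomial.X j) F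

/-- The `G`-rank (`G = GLₙ`) of a (degree `d`) polynomial `F` over `k[[t]]`:
the infimum of `d · val_t(det g) / val_t(g·F)` over matrices `g` over `k[[t]]` with
nonzero determinant such that `val_t(g·F) > 0`. -/
noncomputable def GRank {k : Type*} [Field k] {n : ℕ} (d : ℕ)
    (F : MvPolynomial (Fin n) (PowerSeries k)) : ℝ :=
  sInf {x : ℝ | ∃ g : Matrix (Fin n) (Fin n) (PowerSeries k),
    g.det ≠ 0 ∧ 0 < tval (matAct g F) ∧
    x = (d : ℝ) * (psval g.det : ℝ) / (tval (matAct g F) : ℝ)}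

open MvPolynomial
open PowerSeries (order)

section Aux
variable {k : Type*} [Field k]

lemma aux_psval (p : PowerSeries k) : psval p = (order p).toNat := by
  rcases eq_or_ne p 0 with rfl | hp
  · simp [psval, Nat.sInf_empty]
  · have hfin : order p ≠ ⊤ := by simpa [PowerSeries.order_eq_top] using hp
    set n := (order p).toNat with hn
    have ho : order p = (n : ℕ∞) := (ENat.coe_toNat hfin).symm
    rw [PowerSeries.order_eq_nat] at ho
    refine le_antisymm (Nat.sInf_le ho.1) (le_csInf ⟨n, ho.1⟩ ?_)
    intro m hm
    by_contra hlt
    exact hm (ho.2 m (not_le.mp hlt))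

lemma aux_corner (p q : PowerSeries k) (a b : ℕ)
    (hp : order p = (a : ℕ∞)) (hq : order q = (b : ℕ∞)) :
    PowerSeries.coeff (a + a + b) (p * p * q) ≠ 0 := by
  have h : order (p * p * q) = ((a + a + b : ℕ) : ℕ∞) := by
    rw [PowerSeries.order_mul, PowerSeries.order_mul, hp, hq]
    push_cast; ring
  exact (PowerSeries.order_eq_nat.mp h).1

lemma aux_mixed (p P q Q : PowerSeries k) (a b : ℕ)
    (hp : order p = (a : ℕ∞)) (hP : (a : ℕ∞) < order P)
    (hq : order q = (b : ℕ∞)) (hQ : (b : ℕ∞) < order Q) :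
    PowerSeries.coeff (a + a + b) (p * p * q + 2 * (p * P * Q)) ≠ 0 := by
  have h1 := aux_corner p q a b hp hq
  have h2 : PowerSeries.coeff (a + a + b) (2 * (p * P * Q)) = 0 := by
    apply PowerSeries.coeff_of_lt_order
    have hP' := Order.add_one_le_of_lt hP
    have hQ' := Order.add_one_le_of_lt hQ
    have hlt : ((a + a + b : ℕ) : ℕ∞) < order (p * P * Q) := by
      rw [PowerSeries.order_mul, PowerSeries.order_mul, hp]
      calc ((a + a + b : ℕ) : ℕ∞) < ((a + (a + 1) + (b + 1) : ℕ) : ℕ∞) := by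
            exact_mod_cast (by omega : a + a + b < a + (a + 1) + (b + 1))
        _ = (a : ℕ∞) + ((a : ℕ∞) + 1) + ((b : ℕ∞) + 1) := by push_cast; ring
        _ ≤ (a : ℕ∞) + order P + order Q := add_le_add (add_le_add le_rfl hP') hQ'
    refine lt_of_lt_of_le hlt (le_trans le_add_self (PowerSeries.le_order_mul 2 _))
  rw [map_add, h2, add_zero]; exact h1

lemma aux_cubic_expand {R : Type*} [CommRing R] (c0 c1 d0 d1 : R) :
    (C c0 * X 0 + C c1 * X 1) ^ 2 * (C d0 * X 0 + C d1 * X 1) =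
      monomial (Finsupp.single 0 3) (c0 * c0 * d0)
      + monomial (Finsupp.single 0 2 + Finsupp.single 1 1) (c0 * c0 * d1 + 2 * (c0 * c1 * d0))
      + monomial (Finsupp.single 0 1 + Finsupp.single 1 2) (c1 * c1 * d0 + 2 * (c0 * c1 * d1))
      + (monomial (Finsupp.single 1 3) (c1 * c1 * d1) : MvPolynomial (Fin 2) R) := by
  have hprod : ∀ (m m' : Fin 2 →₀ ℕ), (m + m').prod (fun n e => (X n : MvPolynomial (Fin 2) R) ^ e)
      = m.prod (fun n e => (X n) ^ e) * m'.prod (fun n e => (X n) ^ e) :=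
    fun m m' => Finsupp.prod_add_index' (fun a => pow_zero _) (fun a b c => pow_add _ _ _)
  simp only [monomial_eq, hprod, Finsupp.prod_single_index, pow_zero, map_add, map_mul, map_ofNat]
  ring

lemma ne_30_21 : (Finsupp.single (0:Fin 2) 3) ≠ Finsupp.single 0 2 + Finsupp.single 1 1 := by
  intro h; simpa using DFunLike.congr_fun h 0
lemma ne_30_12 : (Finsupp.single (0:Fin 2) 3) ≠ Finsupp.single 0 1 + Finsupp.single 1 2 := by
  intro h; simpa using DFunLike.congr_fun h 0
lemma ne_30_03 : (Finsupp.single (0:Fin 2) 3) ≠ Finsupp.single 1 3 := by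
  intro h; simpa using DFunLike.congr_fun h 0
lemma ne_21_12 : (Finsupp.single (0:Fin 2) 2 + Finsupp.single 1 1)
    ≠ Finsupp.single 0 1 + Finsupp.single 1 2 := by
  intro h; simpa using DFunLike.congr_fun h 0
lemma ne_21_03 : (Finsupp.single (0:Fin 2) 2 + Finsupp.single 1 1) ≠ Finsupp.single 1 3 := by
  intro h; simpa using DFunLike.congr_fun h 0
lemma ne_12_03 : (Finsupp.single (0:Fin 2) 1 + Finsupp.single 1 2) ≠ Finsupp.single 1 3 := by
  intro h; simpa using DFunLike.congr_fun h 0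

lemma aux_coeff_30 {R : Type*} [CommRing R] (c0 c1 d0 d1 : R) :
    MvPolynomial.coeff (Finsupp.single 0 3)
      ((C c0 * X 0 + C c1 * X 1) ^ 2 * (C d0 * X 0 + C d1 * X 1) : MvPolynomial (Fin 2) R)
      = c0 * c0 * d0 := by
  rw [aux_cubic_expand]
  simp [coeff_monomial, ne_30_21, ne_30_12, ne_30_03, ne_30_21.symm, ne_30_12.symm, ne_30_03.symm]

lemma aux_coeff_21 {R : Type*} [CommRing R] (c0 c1 d0 d1 : R) :
    MvPolynomial.coeff (Finsupp.single 0 2 + Finsupp.single 1 1)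
      ((C c0 * X 0 + C c1 * X 1) ^ 2 * (C d0 * X 0 + C d1 * X 1) : MvPolynomial (Fin 2) R)
      = c0 * c0 * d1 + 2 * (c0 * c1 * d0) := by
  rw [aux_cubic_expand]
  simp [coeff_monomial, ne_30_21, ne_21_12, ne_21_03, ne_30_21.symm, ne_21_12.symm, ne_21_03.symm]

lemma aux_coeff_12 {R : Type*} [CommRing R] (c0 c1 d0 d1 : R) :
    MvPolynomial.coeff (Finsupp.single 0 1 + Finsupp.single 1 2)
      ((C c0 * X 0 + C c1 * X 1) ^ 2 * (C d0 * X 0 + C d1 * X 1) : MvPolynomial (Fin 2) R)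
      = c1 * c1 * d0 + 2 * (c0 * c1 * d1) := by
  rw [aux_cubic_expand]
  simp [coeff_monomial, ne_30_12, ne_21_12, ne_12_03, ne_30_12.symm, ne_21_12.symm, ne_12_03.symm]

lemma aux_coeff_03 {R : Type*} [CommRing R] (c0 c1 d0 d1 : R) :
    MvPolynomial.coeff (Finsupp.single 1 3)
      ((C c0 * X 0 + C c1 * X 1) ^ 2 * (C d0 * X 0 + C d1 * X 1) : MvPolynomial (Fin 2) R)
      = c1 * c1 * d1 := by
  rw [aux_cubic_expand]
  simp [coeff_monomial, ne_30_03, ne_21_03, ne_12_03, ne_30_03.symm, ne_21_03.symm, ne_12_03.symm]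


lemma aux_matAct_cubic (g : Matrix (Fin 2) (Fin 2) (PowerSeries k)) :
    matAct g (MvPolynomial.map (PowerSeries.C (R := k))
        (MvPolynomial.X 0 ^ 2 * MvPolynomial.X 1 : MvPolynomial (Fin 2) k)) =
      (C (g 0 0) * X 0 + C (g 0 1) * X 1) ^ 2 * (C (g 1 0) * X 0 + C (g 1 1) * X 1) := by
  simp [matAct, map_mul, map_pow, MvPolynomial.map_X, aeval_X, Fin.sum_univ_two]

end Aux

/-- over a field `k` with `char k ≠ 2, 3`, the `G`-rank of the binary cubic
`x₁²x₂` equals `3/2`. -/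
theorem stmt13 {k : Type*} [Field k] (h2 : (2 : k) ≠ 0) (h3 : (3 : k) ≠ 0) :
    GRank 3 (MvPolynomial.map (PowerSeries.C (R := k))
      (MvPolynomial.X 0 ^ 2 * MvPolynomial.X 1 : MvPolynomial (Fin 2) k)) = 3 / 2 := by
  classical
  set F0 : MvPolynomial (Fin 2) (PowerSeries k) :=
    MvPolynomial.map (PowerSeries.C (R := k))
      (MvPolynomial.X 0 ^ 2 * MvPolynomial.X 1 : MvPolynomial (Fin 2) k) with hF0
  set S : Set ℝ := {x : ℝ | ∃ g : Matrix (Fin 2) (Fin 2) (PowerSeries k),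
    g.det ≠ 0 ∧ 0 < tval (matAct g F0) ∧
    x = ((3 : ℕ) : ℝ) * (psval g.det : ℝ) / (tval (matAct g F0) : ℝ)} with hS
  -- membership of 3/2
  have hmem : (3 / 2 : ℝ) ∈ S := by
    refine ⟨!![PowerSeries.X, 0; 0, 1], ?_, ?_, ?_⟩
    all_goals {
      have hdet : (!![PowerSeries.X, 0; 0, 1] : Matrix (Fin 2) (Fin 2) (PowerSeries k)).det
          = PowerSeries.X := by
        rw [Matrix.det_fin_two_of]; ring
      have hP : matAct !![PowerSeries.X, 0; 0, 1] F0
          = monomial (Finsupp.single 0 2 + Finsupp.single 1 1)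
              (PowerSeries.X * PowerSeries.X : PowerSeries k) := by
        rw [hF0, aux_matAct_cubic]
        rw [show (!![PowerSeries.X, 0; 0, 1] : Matrix (Fin 2) (Fin 2) (PowerSeries k)) 0 0
            = PowerSeries.X by simp]
        rw [show (!![PowerSeries.X, 0; 0, 1] : Matrix (Fin 2) (Fin 2) (PowerSeries k)) 0 1
            = 0 by simp]
        rw [show (!![PowerSeries.X, 0; 0, 1] : Matrix (Fin 2) (Fin 2) (PowerSeries k)) 1 0
            = 0 by simp]
        rw [show (!![PowerSeries.X, 0; 0, 1] : Matrix (Fin 2) (Fin 2) (PowerSeries k)) 1 1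
            = 1 by simp]
        rw [aux_cubic_expand]
        simp
      have h2mem : (2 : ℕ) ∈ {m : ℕ | ∃ d, PowerSeries.coeff m
          (MvPolynomial.coeff d (matAct !![PowerSeries.X, 0; 0, 1] F0)) ≠ 0} := by
        refine ⟨Finsupp.single 0 2 + Finsupp.single 1 1, ?_⟩
        rw [hP, coeff_monomial, if_pos rfl, ← pow_two, PowerSeries.coeff_X_pow]
        simp
      have hT : tval (matAct !![PowerSeries.X, 0; 0, 1] F0) = 2 := by
        refine le_antisymm (Nat.sInf_le h2mem) (le_csInf ⟨2, h2mem⟩ ?_)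
        rintro m ⟨d, hd⟩
        by_contra hlt
        push_neg at hlt
        apply hd
        rw [hP, coeff_monomial]
        split
        · rw [← pow_two, PowerSeries.coeff_X_pow, if_neg (by omega)]
        · simp
      have hps : psval ((!![PowerSeries.X, 0; 0, 1] :
          Matrix (Fin 2) (Fin 2) (PowerSeries k)).det) = 1 := by
        rw [hdet, aux_psval, PowerSeries.order_X]; rfl
      first
        | (rw [hdet]; exact PowerSeries.X_ne_zero)
        | (rw [hT]; omega)
        | (rw [hT, hps]; norm_num)
    }
  -- lower bound
  have hlb : ∀ x ∈ S, (3 / 2 : ℝ) ≤ x := by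
    rintro x ⟨g, hdet, hpos, rfl⟩
    have hdetr : g.det = g 0 0 * g 1 1 - g 0 1 * g 1 0 := Matrix.det_fin_two g
    have hA : min (order (g 0 0)) (order (g 0 1)) ≠ ⊤ := by
      rw [Ne, min_eq_top, PowerSeries.order_eq_top, PowerSeries.order_eq_top]
      rintro ⟨h1, h1'⟩
      exact hdet (by rw [hdetr, h1, h1']; ring)
    have hB : min (order (g 1 0)) (order (g 1 1)) ≠ ⊤ := by
      rw [Ne, min_eq_top, PowerSeries.order_eq_top, PowerSeries.order_eq_top]
      rintro ⟨h1, h1'⟩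
      exact hdet (by rw [hdetr, h1, h1']; ring)
    set a : ℕ := (min (order (g 0 0)) (order (g 0 1))).toNat with ha
    set b : ℕ := (min (order (g 1 0)) (order (g 1 1))).toNat with hb
    have haA : (a : ℕ∞) = min (order (g 0 0)) (order (g 0 1)) := ENat.coe_toNat hA
    have hbB : (b : ℕ∞) = min (order (g 1 0)) (order (g 1 1)) := ENat.coe_toNat hB
    have hac0 : (a : ℕ∞) ≤ order (g 0 0) := haA.le.trans (min_le_left _ _)
    have hac1 : (a : ℕ∞) ≤ order (g 0 1) := haA.le.trans (min_le_right _ _)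
    have hbd0 : (b : ℕ∞) ≤ order (g 1 0) := hbB.le.trans (min_le_left _ _)
    have hbd1 : (b : ℕ∞) ≤ order (g 1 1) := hbB.le.trans (min_le_right _ _)
    -- tval upper bound
    have tle : tval (matAct g F0) ≤ a + a + b := by
      have key : ∃ d, PowerSeries.coeff (a + a + b)
          (MvPolynomial.coeff d (matAct g F0)) ≠ 0 := by
        rw [hF0, aux_matAct_cubic]
        rcases le_or_gt (order (g 0 0)) (order (g 0 1)) with h01 | h01 <;>
          rcases le_or_gt (order (g 1 0)) (order (g 1 1)) with hD | hD
        · -- corner m30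
          refine ⟨Finsupp.single 0 3, ?_⟩
          rw [aux_coeff_30]
          exact aux_corner _ _ a b (haA.trans (min_eq_left h01)).symm
            (hbB.trans (min_eq_left hD)).symm
        · rcases eq_or_lt_of_le h01 with heq | hlt
          · refine ⟨Finsupp.single 1 3, ?_⟩
            rw [aux_coeff_03]
            exact aux_corner _ _ a b ((haA.trans (min_eq_left h01)).trans heq).symm
              (hbB.trans (min_eq_right hD.le)).symm
          · refine ⟨Finsupp.single 0 2 + Finsupp.single 1 1, ?_⟩
            rw [aux_coeff_21]
            exact aux_mixed (g 0 0) (g 0 1) (g 1 1) (g 1 0) a b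
              (haA.trans (min_eq_left h01)).symm
              ((haA.trans (min_eq_left h01)).trans_lt hlt)
              (hbB.trans (min_eq_right hD.le)).symm
              ((hbB.trans (min_eq_right hD.le)).trans_lt hD)
        · rcases eq_or_lt_of_le hD with heq | hlt
          · refine ⟨Finsupp.single 1 3, ?_⟩
            rw [aux_coeff_03]
            exact aux_corner _ _ a b (haA.trans (min_eq_right h01.le)).symm
              ((hbB.trans (min_eq_left hD)).trans heq).symm
          · refine ⟨Finsupp.single 0 1 + Finsupp.single 1 2, ?_⟩
            rw [aux_coeff_12,
              show g 0 0 * g 0 1 * g 1 1 = g 0 1 * g 0 0 * g 1 1 from by ring]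
            exact aux_mixed (g 0 1) (g 0 0) (g 1 0) (g 1 1) a b
              (haA.trans (min_eq_right h01.le)).symm
              ((haA.trans (min_eq_right h01.le)).trans_lt h01)
              (hbB.trans (min_eq_left hD)).symm
              ((hbB.trans (min_eq_left hD)).trans_lt hlt)
        · refine ⟨Finsupp.single 1 3, ?_⟩
          rw [aux_coeff_03]
          exact aux_corner _ _ a b (haA.trans (min_eq_right h01.le)).symm
            (hbB.trans (min_eq_right hD.le)).symm
      obtain ⟨d, hd⟩ := key
      exact Nat.sInf_le ⟨d, hd⟩
    -- psval lower bound
    have hdfin : order g.det ≠ ⊤ := by simpa [PowerSeries.order_eq_top] using hdet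
    have hord : ((a + b : ℕ) : ℕ∞) ≤ order g.det := by
      rw [hdetr]
      have h1 : ((a + b : ℕ) : ℕ∞) ≤ order (g 0 0 * g 1 1) := by
        rw [PowerSeries.order_mul]; push_cast; exact add_le_add hac0 hbd1
      have h2 : ((a + b : ℕ) : ℕ∞) ≤ order (g 0 1 * g 1 0) := by
        rw [PowerSeries.order_mul]; push_cast; exact add_le_add hac1 hbd0
      refine PowerSeries.le_order _ _ fun i hi => ?_
      rw [map_sub, PowerSeries.coeff_of_lt_order _ (lt_of_lt_of_le hi h1),
        PowerSeries.coeff_of_lt_order _ (lt_of_lt_of_le hi h2), sub_zero]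
    have hpd : a + b ≤ psval g.det := by
      rw [aux_psval]
      have := ENat.toNat_le_toNat hord hdfin
      simpa only [ENat.toNat_coe] using this
    -- final arithmetic
    have hTpos : (0 : ℝ) < (tval (matAct g F0) : ℝ) := by exact_mod_cast hpos
    have hT2pd : ((tval (matAct g F0) : ℕ) : ℝ) ≤ 2 * (psval g.det : ℝ) := by
      have : (tval (matAct g F0) : ℕ) ≤ 2 * psval g.det := by omega
      exact_mod_cast this
    rw [le_div_iff₀ hTpos]
    push_cast
    linarith
  rw [GRank]
  exact le_antisymm (csInf_le ⟨3/2, hlb⟩ hmem) (le_csInf ⟨3/2, hmem⟩ hlb)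
end

section
/- Let f be a homogeneous polynomial of degree d ≥ 2 over a field k with slice rank r over k, i.e., f = l₁f₁ + ... + l_r f_r with lᵢ linear. Then for g(t) = diag(t,...,t,1,...,1) (r copies of t) with respect to a basis whose first r dual vectors are l₁,...,l_r, one has val_t(g(t)·f) ≥ 1 and val_t(det g(t)) = r, hence r^G_k(f) ≤ d·r. -/
open MvPolynomial

lemma matAct_diag_coeff {k : Type*} [Field k] {n r : ℕ}
    (f : MvPolynomial (Fin n) k) (m : Fin n →₀ ℕ) :
    MvPolynomial.coeff m (matAct
      (Matrix.diagonal fun i : Fin n => if (i : ℕ) < r then (PowerSeries.X : PowerSeries k) else 1)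
      (MvPolynomial.map PowerSeries.C f))
    = (PowerSeries.X : PowerSeries k) ^ (∑ i : Fin n, if (i : ℕ) < r then m i else 0)
        * PowerSeries.C (MvPolynomial.coeff m f) := by
  classical
  set c : Fin n → PowerSeries k := fun i => if (i : ℕ) < r then PowerSeries.X else 1 with hc
  have hsub : (fun i : Fin n => ∑ j, MvPolynomial.C (Matrix.diagonal c i j) * MvPolynomial.X j)
      = fun i : Fin n => MvPolynomial.C (c i) * MvPolynomial.X i := by
    funext i
    rw [Finset.sum_eq_single i]
    · simp [Matrix.diagonal_apply_eq]
    · intro j _ hj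
      simp [Matrix.diagonal_apply_ne' c hj]
    · simp
  have hmapC : MvPolynomial.map PowerSeries.C f
      = MvPolynomial.map (algebraMap k (PowerSeries k)) f := by
    have h : (PowerSeries.C (R := k)) = algebraMap k (PowerSeries k) :=
      RingHom.ext fun a => PowerSeries.C_eq_algebraMap
    rw [h]
  rw [matAct, hsub, hmapC, aeval_map_algebraMap]
  -- now compute aeval over f directly
  have key : (aeval fun i : Fin n => MvPolynomial.C (c i) * MvPolynomial.X i) f
      = ∑ m' ∈ f.support, monomial m' (PowerSeries.C (MvPolynomial.coeff m' f) * ∏ i, c i ^ m' i) := by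
    conv_lhs => rw [f.as_sum]
    rw [map_sum]
    refine Finset.sum_congr rfl fun m' _ => ?_
    rw [aeval_monomial, monomial_eq]
    have h1 : (m'.prod fun i e => (MvPolynomial.C (c i) * MvPolynomial.X i) ^ e)
        = MvPolynomial.C (∏ i, c i ^ m' i) * (m'.prod fun i e => (MvPolynomial.X i : MvPolynomial (Fin n) (PowerSeries k)) ^ e) := by
      simp only [Finsupp.prod, mul_pow, Finset.prod_mul_distrib]
      congr 1
      calc ∏ x ∈ m'.support, MvPolynomial.C (c x) ^ m' x
          = ∏ x ∈ m'.support, MvPolynomial.C (c x ^ m' x) := by simp [map_pow]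
        _ = MvPolynomial.C (∏ x ∈ m'.support, c x ^ m' x) := by rw [map_prod]
        _ = MvPolynomial.C (∏ i : Fin n, c i ^ m' i) := by
              congr 1
              exact Finset.prod_subset (Finset.subset_univ _) (fun i _ hi => by
                simp [Finsupp.notMem_support_iff.mp hi])
    rw [h1]
    have h2 : algebraMap k (MvPolynomial (Fin n) (PowerSeries k)) (MvPolynomial.coeff m' f)
        = MvPolynomial.C (PowerSeries.C (MvPolynomial.coeff m' f)) := by
      simp [MvPolynomial.algebraMap_eq, PowerSeries.C_eq_algebraMap]
    rw [h2, ← mul_assoc, ← map_mul]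
  rw [key]
  have hprod : ∀ m' : Fin n →₀ ℕ, (∏ i, c i ^ m' i)
      = (PowerSeries.X : PowerSeries k) ^ (∑ i : Fin n, if (i : ℕ) < r then m' i else 0) := by
    intro m'
    rw [← Finset.prod_pow_eq_pow_sum]
    refine Finset.prod_congr rfl fun i _ => ?_
    simp only [hc]
    split <;> simp
  simp only [MvPolynomial.coeff_sum, MvPolynomial.coeff_monomial]
  by_cases hm : m ∈ f.support
  · rw [Finset.sum_eq_single m]
    · simp [hprod m, mul_comm]
    · intro b _ hb; simp [hb]
    · intro h; exact absurd hm h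
  · rw [Finset.sum_eq_zero]
    · have : MvPolynomial.coeff m f = 0 := by simpa [MvPolynomial.mem_support_iff] using hm
      simp [this]
    · intro b hb
      have : m ≠ b := by rintro rfl; exact hm hb
      simp [Ne.symm this]

/-- if `f` is a nonzero homogeneous polynomial of degree `d ≥ 2` of slice rank
at most `r` in normalized coordinates (i.e. `f` lies in the ideal generated by the first `r`
variables), then for `g(t) = diag(t,...,t,1,...,1)` (with `r` copies of `t`) one has
`val_t(g(t)·f) ≥ 1` and `val_t(det g(t)) = r`; hence `r^G_k(f) ≤ d·r`. -/
theorem stmt14 {k : Type*} [Field k] {n d r : ℕ} (hd : 2 ≤ d) (hr : r ≤ n)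
    (f : MvPolynomial (Fin n) k) (hf : f ≠ 0) (hdeg : f.IsHomogeneous d)
    (hslice : f ∈ Ideal.span {p : MvPolynomial (Fin n) k | ∃ i : Fin n, (i : ℕ) < r ∧ p = MvPolynomial.X i}) :
    1 ≤ tval (matAct
        (Matrix.diagonal fun i : Fin n => if (i : ℕ) < r then (PowerSeries.X : PowerSeries k) else 1)
        (MvPolynomial.map PowerSeries.C f)) ∧
    psval (Matrix.diagonal fun i : Fin n =>
        if (i : ℕ) < r then (PowerSeries.X : PowerSeries k) else 1).det = r ∧
    GRank d (MvPolynomial.map PowerSeries.C f) ≤ (d : ℝ) * r := by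
  classical
  set g : Matrix (Fin n) (Fin n) (PowerSeries k) :=
    Matrix.diagonal fun i : Fin n => if (i : ℕ) < r then (PowerSeries.X : PowerSeries k) else 1
    with hg
  set F : MvPolynomial (Fin n) (PowerSeries k) := MvPolynomial.map PowerSeries.C f with hF
  -- the weight of a monomial
  set w : (Fin n →₀ ℕ) → ℕ := fun m => ∑ i : Fin n, if (i : ℕ) < r then m i else 0 with hw
  -- determinant computation
  have hdet : g.det = (PowerSeries.X : PowerSeries k) ^ r := by
    rw [hg, Matrix.det_diagonal]
    have h1 : ∀ i : Fin n, (if (i : ℕ) < r then (PowerSeries.X : PowerSeries k) else 1)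
        = PowerSeries.X ^ (if (i : ℕ) < r then 1 else 0) := by
      intro i; split <;> simp
    rw [Finset.prod_congr rfl fun i _ => h1 i, Finset.prod_pow_eq_pow_sum]
    congr 1
    rw [Fin.sum_univ_eq_sum_range (fun i => if i < r then 1 else 0) n, Finset.sum_boole]
    have h2 : (Finset.range n).filter (fun i => i < r) = Finset.range r := by
      ext x; simp; omega
    rw [h2]
    simp
  have hdetne : g.det ≠ 0 := by
    rw [hdet]; exact pow_ne_zero _ PowerSeries.X_ne_zero
  -- psval of the determinant
  have hpsval : psval g.det = r := by
    rw [hdet, psval]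
    have h3 : {m : ℕ | PowerSeries.coeff m ((PowerSeries.X : PowerSeries k) ^ r) ≠ 0}
        = {r} := by
      ext m
      simp [PowerSeries.coeff_X_pow]
    rw [h3]
    exact csInf_singleton r
  -- every monomial of f has positive weight
  have hsupp : ∀ m ∈ f.support, 1 ≤ w m := by
    have himg : {p : MvPolynomial (Fin n) k | ∃ i : Fin n, (i : ℕ) < r ∧ p = MvPolynomial.X i}
        = MvPolynomial.X '' {i : Fin n | (i : ℕ) < r} := by
      ext p
      constructor
      · rintro ⟨i, hi, rfl⟩; exact ⟨i, hi, rfl⟩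
      · rintro ⟨i, hi, rfl⟩; exact ⟨i, hi, rfl⟩
    rw [himg] at hslice
    have h := MvPolynomial.mem_ideal_span_X_image.mp hslice
    intro m hm
    obtain ⟨i, hi, hne⟩ := h m hm
    simp only [Set.mem_setOf_eq] at hi
    calc 1 ≤ (if (i : ℕ) < r then m i else 0) := by
          rw [if_pos hi]; omega
      _ ≤ w m := Finset.single_le_sum
          (f := fun j : Fin n => if (j : ℕ) < r then m j else 0)
          (fun j _ => Nat.zero_le _) (Finset.mem_univ i)
  -- the key coefficient formula
  have hcoeff : ∀ (j : ℕ) (m : Fin n →₀ ℕ),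
      PowerSeries.coeff j (MvPolynomial.coeff m (matAct g F))
        = (if j = w m then 1 else 0) * MvPolynomial.coeff m f := by
    intro j m
    rw [hg, hF, matAct_diag_coeff, PowerSeries.coeff_mul_C, PowerSeries.coeff_X_pow]
  -- tval bound
  have htval : 1 ≤ tval (matAct g F) := by
    obtain ⟨m₀, hm₀⟩ := (MvPolynomial.support_nonempty.mpr hf)
    have hmem0 : w m₀ ∈ {m : ℕ | ∃ dd, PowerSeries.coeff m (MvPolynomial.coeff dd (matAct g F)) ≠ 0} := by
      refine ⟨m₀, ?_⟩
      rw [hcoeff, if_pos rfl, one_mul]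
      exact MvPolynomial.mem_support_iff.mp hm₀
    rw [tval]
    refine Nat.one_le_iff_ne_zero.mpr fun h0 => ?_
    rcases Nat.sInf_eq_zero.mp h0 with h0' | h0'
    · obtain ⟨m, hm⟩ := h0'
      rw [hcoeff] at hm
      rcases eq_or_ne (MvPolynomial.coeff m f) 0 with hz | hz
      · exact hm (by rw [hz, mul_zero])
      · have hms : m ∈ f.support := MvPolynomial.mem_support_iff.mpr hz
        have := hsupp m hms
        have : (0 : ℕ) ≠ w m := by omega
        exact hm (by rw [if_neg this, zero_mul])
    · rw [h0'] at hmem0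
      exact absurd hmem0 (Set.notMem_empty _)
  refine ⟨htval, hpsval, ?_⟩
  -- GRank bound
  have htvpos : 0 < tval (matAct g F) := htval
  have hbdd : BddBelow {x : ℝ | ∃ g' : Matrix (Fin n) (Fin n) (PowerSeries k),
      g'.det ≠ 0 ∧ 0 < tval (matAct g' F) ∧
      x = (d : ℝ) * (psval g'.det : ℝ) / (tval (matAct g' F) : ℝ)} := by
    refine ⟨0, ?_⟩
    rintro x ⟨g', _, ht, rfl⟩
    exact div_nonneg (mul_nonneg (Nat.cast_nonneg _) (Nat.cast_nonneg _)) (Nat.cast_nonneg _)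
  have hmem : ((d : ℝ) * (psval g.det : ℝ) / (tval (matAct g F) : ℝ)) ∈
      {x : ℝ | ∃ g' : Matrix (Fin n) (Fin n) (PowerSeries k),
      g'.det ≠ 0 ∧ 0 < tval (matAct g' F) ∧
      x = (d : ℝ) * (psval g'.det : ℝ) / (tval (matAct g' F) : ℝ)} :=
    ⟨g, hdetne, htvpos, rfl⟩
  have h1 : GRank d F ≤ (d : ℝ) * (psval g.det : ℝ) / (tval (matAct g F) : ℝ) :=
    csInf_le hbdd hmem
  rw [hpsval] at h1
  refine h1.trans ?_
  apply div_le_self (by positivity)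
  exact_mod_cast htval
end

section
/- Let f = v^d be the d-th power of a nonzero linear form v over a field k. Then r^G_k(f) = 1: the infimum of d·val_t(det g(t))/val_t(g(t)·v^d) over g(t) ∈ GL_n(k[[t]]) with val_t(g(t)·v^d) > 0 equals 1, attained by g(t) = diag(t,1,...,1) in a basis with first coordinate dual to v. -/
section Aux

variable {k : Type*} [Field k] {n : ℕ}

lemma psval_mem {p : PowerSeries k} (hp : p ≠ 0) :
    PowerSeries.coeff (psval p) p ≠ 0 := by
  have hne : {m : ℕ | PowerSeries.coeff m p ≠ 0}.Nonempty := by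
    by_contra h
    simp only [Set.not_nonempty_iff_eq_empty, Set.eq_empty_iff_forall_notMem,
      Set.mem_setOf_eq, not_not] at h
    exact hp (PowerSeries.ext fun m => h m)
  exact Nat.sInf_mem hne

lemma psval_X_pow_mul {w : PowerSeries k}
    (hw : PowerSeries.constantCoeff w ≠ 0) (N : ℕ) :
    psval ((PowerSeries.X : PowerSeries k) ^ N * w) = N := by
  have h1 : PowerSeries.coeff N (PowerSeries.X ^ N * w) ≠ 0 := by
    rw [PowerSeries.coeff_X_pow_mul']
    simpa [PowerSeries.coeff_zero_eq_constantCoeff] using hw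
  have h2 : ∀ m < N, PowerSeries.coeff m (PowerSeries.X ^ N * w) = 0 :=
    PowerSeries.X_pow_dvd_iff.1 (dvd_mul_right _ w)
  refine le_antisymm (Nat.sInf_le h1) ?_
  exact le_csInf ⟨N, h1⟩ fun m hm => not_lt.1 fun hlt => hm (h2 m hlt)

lemma psval_X_pow (N : ℕ) : psval ((PowerSeries.X : PowerSeries k) ^ N) = N := by
  have := psval_X_pow_mul (w := (1 : PowerSeries k)) (k := k) (by simp) N
  simpa using this

lemma psval_X : psval (PowerSeries.X : PowerSeries k) = 1 := by
  simpa using psval_X_pow (k := k) 1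

lemma tval_monomial (s : Fin n →₀ ℕ) (c : PowerSeries k) :
    tval (MvPolynomial.monomial s c : MvPolynomial (Fin n) (PowerSeries k)) = psval c := by
  unfold tval psval
  congr 1
  ext m
  simp only [Set.mem_setOf_eq]
  constructor
  · rintro ⟨d', hd'⟩
    rw [MvPolynomial.coeff_monomial] at hd'
    split_ifs at hd' with h
    · exact hd'
    · simp at hd'
  · intro h
    exact ⟨s, by simpa [MvPolynomial.coeff_monomial] using h⟩

lemma tval_le_psval_aeval {P : MvPolynomial (Fin n) (PowerSeries k)}
    (pt : Fin n → PowerSeries k) (hpt : ∀ j, pt j = 0 ∨ pt j = 1)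
    (h0 : MvPolynomial.aeval pt P ≠ 0) :
    tval P ≤ psval (MvPolynomial.aeval pt P) := by
  classical
  have hm : PowerSeries.coeff (psval (MvPolynomial.aeval pt P))
      (MvPolynomial.aeval pt P) ≠ 0 := psval_mem h0
  rw [MvPolynomial.aeval_def, MvPolynomial.eval₂_eq, map_sum] at hm
  obtain ⟨d', -, hd'⟩ := Finset.exists_ne_zero_of_sum_ne_zero hm
  simp only [Algebra.algebraMap_self_apply] at hd'
  have hprod : (∏ i ∈ d'.support, pt i ^ d' i) = 0 ∨
      (∏ i ∈ d'.support, pt i ^ d' i) = 1 := by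
    by_cases hz : (∏ i ∈ d'.support, pt i ^ d' i) = 0
    · exact Or.inl hz
    · refine Or.inr (Finset.prod_eq_one fun i hi => ?_)
      rcases hpt i with h | h
      · have h2 : d' i ≠ 0 := Finsupp.mem_support_iff.1 hi
        exact absurd (Finset.prod_eq_zero hi (by rw [h, zero_pow h2])) hz
      · rw [h, one_pow]
  refine Nat.sInf_le ⟨d', ?_⟩
  rcases hprod with h1 | h1
  · rw [h1, mul_zero, map_zero] at hd'
    exact absurd rfl hd'
  · rw [h1, mul_one] at hd'
    have e : (MvPolynomial.aeval pt) P = ∑ x ∈ P.support, MvPolynomial.coeff x P * ∏ i ∈ x.support, pt i ^ x i := by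
      rw [MvPolynomial.aeval_def, MvPolynomial.eval₂_eq]; simp
    rw [e]
    simpa using hd'

end Aux

/-- the `G`-rank of the `d`-th power of a nonzero linear form equals `1`
(in a basis whose first coordinate is dual to `v`, so `f = x₁^d`). -/
theorem stmt15 {k : Type*} [Field k] {n d : ℕ} (hn : 0 < n) (hd : 1 ≤ d) :
    GRank d (MvPolynomial.map (PowerSeries.C (R := k))
      ((MvPolynomial.X ⟨0, hn⟩ : MvPolynomial (Fin n) k) ^ d)) = 1 := by
  classical
  set i0 : Fin n := ⟨0, hn⟩
  set F : MvPolynomial (Fin n) (PowerSeries k) :=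
    MvPolynomial.map (PowerSeries.C (R := k))
      ((MvPolynomial.X i0 : MvPolynomial (Fin n) k) ^ d) with hFdef
  have hdpos : (0 : ℕ) < d := hd
  have hF : ∀ g : Matrix (Fin n) (Fin n) (PowerSeries k),
      matAct g F = (∑ j, MvPolynomial.C (g i0 j) * MvPolynomial.X j) ^ d := by
    intro g
    simp [matAct, hFdef]
  refine IsLeast.csInf_eq ⟨?_, ?_⟩
  · -- 1 is in the set
    refine ⟨Matrix.diagonal (fun i => if i = i0 then PowerSeries.X else 1), ?_, ?_, ?_⟩
    · rw [Matrix.det_diagonal]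
      simp only [Finset.prod_ite_eq', Finset.mem_univ, if_true]
      exact PowerSeries.X_ne_zero
    · have : matAct (Matrix.diagonal (fun i => if i = i0 then PowerSeries.X else 1)) F
          = MvPolynomial.monomial (Finsupp.single i0 d) ((PowerSeries.X : PowerSeries k) ^ d) := by
        rw [hF]
        have hsum : (∑ j, MvPolynomial.C
            ((Matrix.diagonal (fun i => if i = i0 then (PowerSeries.X : PowerSeries k) else 1)) i0 j)
            * MvPolynomial.X j : MvPolynomial (Fin n) (PowerSeries k))
            = MvPolynomial.C PowerSeries.X * MvPolynomial.X i0 := by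
          rw [Finset.sum_eq_single i0]
          · simp [Matrix.diagonal_apply]
          · intro j _ hj
            simp [Matrix.diagonal_apply, Ne.symm hj]
          · simp
        rw [hsum, mul_pow, ← map_pow, MvPolynomial.C_mul_X_pow_eq_monomial]
      rw [this, tval_monomial, psval_X_pow]
      exact hdpos
    · have : matAct (Matrix.diagonal (fun i => if i = i0 then PowerSeries.X else 1)) F
          = MvPolynomial.monomial (Finsupp.single i0 d) ((PowerSeries.X : PowerSeries k) ^ d) := by
        rw [hF]
        have hsum : (∑ j, MvPolynomial.C
            ((Matrix.diagonal (fun i => if i = i0 then (PowerSeries.X : PowerSeries k) else 1)) i0 j)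
            * MvPolynomial.X j : MvPolynomial (Fin n) (PowerSeries k))
            = MvPolynomial.C PowerSeries.X * MvPolynomial.X i0 := by
          rw [Finset.sum_eq_single i0]
          · simp [Matrix.diagonal_apply]
          · intro j _ hj
            simp [Matrix.diagonal_apply, Ne.symm hj]
          · simp
        rw [hsum, mul_pow, ← map_pow, MvPolynomial.C_mul_X_pow_eq_monomial]
      rw [this, tval_monomial, psval_X_pow]
      rw [Matrix.det_diagonal]
      simp only [Finset.prod_ite_eq', Finset.mem_univ, if_true]
      rw [psval_X]
      field_simp
      norm_num
  · -- 1 is a lower bound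
    rintro x ⟨g, hg, htv, rfl⟩
    set a : Fin n → PowerSeries k := g i0 with ha
    have hA : ∃ j, a j ≠ 0 := by
      by_contra h
      push_neg at h
      exact hg (Matrix.det_eq_zero_of_row_eq_zero i0 h)
    have hS : {m : ℕ | ∃ j, PowerSeries.coeff m (a j) ≠ 0}.Nonempty := by
      obtain ⟨j, hj⟩ := hA
      refine ⟨psval (a j), ?_⟩
      show ∃ j', PowerSeries.coeff (psval (a j)) (a j') ≠ 0
      exact ⟨j, psval_mem hj⟩
    set v : ℕ := sInf {m : ℕ | ∃ j, PowerSeries.coeff m (a j) ≠ 0} with hv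
    obtain ⟨j₀, hj₀⟩ : ∃ j, PowerSeries.coeff v (a j) ≠ 0 := Nat.sInf_mem hS
    have hlow : ∀ j, ∀ m < v, PowerSeries.coeff m (a j) = 0 := by
      intro j m hm
      by_contra hne
      have hmem : m ∈ {m : ℕ | ∃ j, PowerSeries.coeff m (a j) ≠ 0} := ⟨j, hne⟩
      exact absurd (Nat.sInf_le hmem) (not_le.2 hm)
    have hdvd : ∀ j, (PowerSeries.X : PowerSeries k) ^ v ∣ a j := fun j =>
      PowerSeries.X_pow_dvd_iff.2 (hlow j)
    choose h hh using hdvd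
    -- valuation of the determinant is at least v
    have hdet : g.det = PowerSeries.X ^ v * (g.updateRow i0 h).det := by
      conv_lhs => rw [← Matrix.updateRow_eq_self g i0]
      have hrow : (g i0 : Fin n → PowerSeries k)
          = ((PowerSeries.X : PowerSeries k) ^ v) • h := by
        funext j
        rw [Pi.smul_apply, smul_eq_mul, ← hh]
      rw [hrow, Matrix.det_updateRow_smul]
    have hvdet : v ≤ psval g.det := by
      refine le_csInf ⟨psval g.det, psval_mem hg⟩ fun m hm => ?_
      by_contra hlt
      push_neg at hlt
      have : PowerSeries.coeff m g.det = 0 := by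
        rw [hdet]
        exact PowerSeries.X_pow_dvd_iff.1 (dvd_mul_right _ _) m hlt
      exact hm this
    -- constant coefficient of h j₀ is nonzero
    have hc0 : PowerSeries.constantCoeff (h j₀) ≠ 0 := by
      have h5 := hj₀
      rw [hh j₀, PowerSeries.coeff_X_pow_mul'] at h5
      simpa [PowerSeries.coeff_zero_eq_constantCoeff] using h5
    -- bound on tval
    have haeval : MvPolynomial.aeval (fun j => if j = j₀ then (1 : PowerSeries k) else 0)
        (matAct g F) = (a j₀) ^ d := by
      rw [hF, map_pow, map_sum]
      congr 1
      simp only [map_mul, MvPolynomial.aeval_C, MvPolynomial.aeval_X]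
      rw [Finset.sum_eq_single j₀]
      · simp [Algebra.algebraMap_self_apply, ha]
      · intro j _ hj
        simp [hj]
      · simp
    have hane : (a j₀) ^ d ≠ 0 := by
      apply pow_ne_zero
      intro h0
      exact hj₀ (by simp [h0])
    have hps : psval ((a j₀) ^ d) = d * v := by
      rw [hh j₀, mul_pow, ← pow_mul, mul_comm v d]
      refine psval_X_pow_mul ?_ (d * v)
      rw [map_pow]
      exact pow_ne_zero d hc0
    have htle : tval (matAct g F) ≤ d * v := by
      have := tval_le_psval_aeval (fun j => if j = j₀ then (1 : PowerSeries k) else 0)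
        (fun j => by by_cases hj : j = j₀ <;> simp [hj]) (by rw [haeval]; exact hane)
      rwa [haeval, hps] at this
    have hfin : tval (matAct g F) ≤ d * psval g.det :=
      le_trans htle (Nat.mul_le_mul_left d hvdet)
    rw [le_div_iff₀ (by exact_mod_cast htv), one_mul]
    exact_mod_cast hfin
end
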